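/- Let n ≥ 3 and let p : Fin n → ℂ be an injective family of n points in the Euclidean plane (ℂ with its standard inner product structure). Suppose every angle ∠(p i, p j, p k) over pairwise distinct indices i, j, k is at least π / n. Then the points form a regular n-gon: there exist a center c ∈ ℂ, a radius r > 0, a unit complex number u, and a bijection σ : Fin n ≃ Fin n such that p (σ k) = c + r * u * Complex.exp (2 * π * k * Complex.I / n) for all k. -/

import Mathlib

open Real EuclideanGeometry
open scoped InnerProductSpace

theorem angle_mul_left (a x y : ℂ) (ha : a ≠ 0) :
    InnerProductGeometry.angle (a*x) (a*y) = InnerProductGeometry.angle x y := by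
  unfold InnerProductGeometry.angle
  have h1 : ⟪a*x, a*y⟫_ℝ = ‖a‖ ^2 * ⟪x,y⟫_ℝ := by
    rw [Complex.inner, Complex.inner, map_mul]
    have : a * y * ((starRingEnd ℂ) a * (starRingEnd ℂ) x)
        = (((‖a‖)^2 : ℝ) : ℂ) * (y * (starRingEnd ℂ) x) := by
      rw [Complex.sq_norm, Complex.normSq_eq_conj_mul_self]; push_cast; ring
    rw [this, Complex.re_ofReal_mul]
  have h2 : ∀ z : ℂ, ‖a * z‖ = ‖a‖ * ‖z‖ := by
    intro z; exact norm_mul a z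
  rw [h1, h2, h2]
  congr 1
  rw [show (‖a‖ * ‖x‖) * (‖a‖ * ‖y‖)
      = ‖a‖^2 * (‖x‖*‖y‖) by ring,
    mul_div_mul_left _ _ (pow_ne_zero 2 (norm_ne_zero_iff.mpr ha))]

theorem inner_complex_eq (z w : ℂ) :
    ⟪z, w⟫_ℝ = ‖z‖ * ‖w‖ * Real.cos (z.arg - w.arg) := by
  rw [Complex.inner]
  conv_lhs => rw [← Complex.norm_mul_exp_arg_mul_I z, ← Complex.norm_mul_exp_arg_mul_I w]
  rw [map_mul]
  have hc : (starRingEnd ℂ) (Complex.exp (z.arg * Complex.I))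
      = Complex.exp (-(z.arg) * Complex.I) := by
    rw [← Complex.exp_conj]; congr 1; simp
  rw [hc, Complex.conj_ofReal]
  have : ((‖w‖ : ℝ) : ℂ) * Complex.exp (w.arg * Complex.I)
      * (((‖z‖ : ℝ) : ℂ) * Complex.exp (-(z.arg) * Complex.I))
      = ((‖z‖ * ‖w‖ : ℝ) : ℂ)
        * Complex.exp (((w.arg - z.arg : ℝ) : ℂ) * Complex.I) := by
    push_cast
    rw [show ((w.arg:ℂ) - z.arg) * Complex.I = -(z.arg) * Complex.I + w.arg * Complex.I by ring,
      Complex.exp_add]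
    ring
  rw [this, Complex.re_ofReal_mul, Complex.exp_ofReal_mul_I_re, Real.cos_sub, Real.cos_sub]
  ring

theorem angle_eq_abs_arg_sub (z w : ℂ) (hz : z ≠ 0) (hw : w ≠ 0)
    (hz1 : 0 ≤ z.arg) (hw1 : 0 ≤ w.arg) :
    InnerProductGeometry.angle z w = |z.arg - w.arg| := by
  unfold InnerProductGeometry.angle
  rw [inner_complex_eq]
  have hz0 : (0:ℝ) < ‖z‖ := norm_pos_iff.mpr hz
  have hw0 : (0:ℝ) < ‖w‖ := norm_pos_iff.mpr hw
  rw [show ‖z‖ * ‖w‖ * Real.cos (z.arg - w.arg)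
      / (‖z‖ * ‖w‖) = Real.cos (z.arg - w.arg) by
    field_simp]
  rw [← Real.cos_abs]
  apply Real.arccos_cos (abs_nonneg _)
  have h1 : z.arg ≤ π := Complex.arg_le_pi z
  have h2 : w.arg ≤ π := Complex.arg_le_pi w
  rw [abs_le]; constructor <;> linarith

theorem spread (d : ℝ) : ∀ (m : ℕ) (T : Finset ℝ) (hne : T.Nonempty), T.card = m + 1 →
    (∀ x ∈ T, ∀ y ∈ T, x ≠ y → d ≤ |x - y|) →
    (m : ℝ) * d ≤ T.max' hne - T.min' hne := by
  intro m
  induction m with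
  | zero =>
    intro T hne _ _
    have := Finset.min'_le T _ (T.max'_mem hne)
    push_cast; linarith
  | succ m ih =>
    intro T hne hcard hgap
    set M := T.max' hne with hM
    have hMmem : M ∈ T := T.max'_mem hne
    set T' := T.erase M with hT'
    have hcard' : T'.card = m + 1 := by
      rw [hT', Finset.card_erase_of_mem hMmem, hcard]; rfl
    have hne' : T'.Nonempty := Finset.card_pos.mp (by omega)
    have hminmem : T.min' hne ∈ T' := by
      rw [hT', Finset.mem_erase]
      refine ⟨?_, T.min'_mem hne⟩
      exact ne_of_lt (Finset.min'_lt_max'_of_card (s := T) (by omega))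
    have hmin_eq : T'.min' hne' = T.min' hne := by
      apply le_antisymm (Finset.min'_le _ _ hminmem)
      exact Finset.min'_le _ _ (Finset.mem_of_mem_erase (T'.min'_mem hne'))
    have hmax'mem : T'.max' hne' ∈ T := Finset.mem_of_mem_erase (T'.max'_mem hne')
    have hmaxne : T'.max' hne' ≠ M := (Finset.mem_erase.mp (T'.max'_mem hne')).1
    have hle : T'.max' hne' ≤ M := Finset.le_max' _ _ hmax'mem
    have hgapM : d ≤ M - T'.max' hne' := by
      have := hgap _ hmax'mem _ hMmem hmaxne
      rwa [abs_sub_comm, _root_.abs_of_nonneg (by linarith)] at this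
    have hih := ih T' hne' hcard' (fun x hx y hy hxy =>
      hgap x (Finset.mem_of_mem_erase hx) y (Finset.mem_of_mem_erase hy) hxy)
    rw [hmin_eq] at hih
    push_cast
    push_cast at hih
    linarith

theorem euclid_angle_eq (a b c : ℂ) :
    EuclideanGeometry.angle a b c = InnerProductGeometry.angle (a - b) (c - b) := by
  rw [EuclideanGeometry.angle, vsub_eq_sub, vsub_eq_sub]

theorem div_im_eq (z w : ℂ) (hw : w ≠ 0) :
    (z/w).im = ‖z‖ / ‖w‖ * Real.sin (z.arg - w.arg) := by
  conv_lhs => rw [← Complex.norm_mul_exp_arg_mul_I z, ← Complex.norm_mul_exp_arg_mul_I w]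
  have habs : (0:ℝ) < ‖w‖ := norm_pos_iff.mpr hw
  rw [show (((‖z‖ : ℝ) : ℂ) * Complex.exp (z.arg * Complex.I))
      / (((‖w‖ : ℝ) : ℂ) * Complex.exp (w.arg * Complex.I))
      = ((‖z‖ / ‖w‖ : ℝ) : ℂ)
        * Complex.exp (((z.arg - w.arg : ℝ) : ℂ) * Complex.I) by
    rw [div_eq_iff (by
      apply mul_ne_zero
      · exact_mod_cast habs.ne'
      · exact Complex.exp_ne_zero _)]
    push_cast
    rw [show ((z.arg : ℂ) - w.arg) * Complex.I = z.arg * Complex.I - w.arg * Complex.I by ring,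
      Complex.exp_sub]
    field_simp [Complex.exp_ne_zero]
    exact (mul_div_cancel_right₀ _ (by exact_mod_cast habs.ne')).symm]
  rw [Complex.mul_im, Complex.ofReal_re, Complex.ofReal_im, Complex.exp_ofReal_mul_I_im]
  ring

theorem vertexA (n : ℕ) (hn : 3 ≤ n) (p : Fin n → ℂ) (hp : Function.Injective p)
    (h : ∀ i j k : Fin n, i ≠ j → j ≠ k → i ≠ k →
      π / n ≤ EuclideanGeometry.angle (p i) (p j) (p k))
    (j : Fin n) (u : ℂ) (hu : u ≠ 0)
    (hhalf : ∀ i, i ≠ j → 0 ≤ ((p i - p j)/u).im) :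
    ∃ a, a ≠ j ∧ ((p a - p j ≠ 0) ∧ ∀ i, i ≠ a → 0 ≤ ((p i - p a)/(p a - p j)).im) ∧
      (∀ b, b ≠ j → p b - p j = -u →
        p a - p j = Complex.exp (2*π*Complex.I/n) * u) := by
  have hnR : (0:ℝ) < n := by positivity
  have hπn : (0:ℝ) < π / n := by positivity
  set q : Fin n → ℂ := fun i => (p i - p j)/u with hq
  set φ : Fin n → ℝ := fun i => (q i).arg with hφ
  have hqne : ∀ i, i ≠ j → q i ≠ 0 := fun i hi =>
    div_ne_zero (sub_ne_zero.mpr (fun he => hi (hp he))) hu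
  have hφ0 : ∀ i, i ≠ j → 0 ≤ φ i := fun i hi => Complex.arg_nonneg_iff.mpr (hhalf i hi)
  have hφπ : ∀ i, φ i ≤ π := fun i => Complex.arg_le_pi _
  -- angles are differences of φ
  have hangle : ∀ i i', i ≠ j → i' ≠ j →
      EuclideanGeometry.angle (p i) (p j) (p i') = |φ i - φ i'| := by
    intro i i' hi hi'
    rw [euclid_angle_eq]
    have h1 : p i - p j = u * q i := by simp only [hq]; rw [mul_div_cancel₀ _ hu]
    have h2 : p i' - p j = u * q i' := by simp only [hq]; rw [mul_div_cancel₀ _ hu]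
    rw [h1, h2, angle_mul_left u _ _ hu,
      angle_eq_abs_arg_sub _ _ (hqne i hi) (hqne i' hi') (hφ0 i hi) (hφ0 i' hi')]
  have hgap : ∀ i i', i ≠ j → i' ≠ j → i ≠ i' → π/n ≤ |φ i - φ i'| := by
    intro i i' hi hi' hii
    rw [← hangle i i' hi hi']
    exact h i j i' hi (Ne.symm hi') hii
  have hφinj : ∀ i i', i ≠ j → i' ≠ j → φ i = φ i' → i = i' := by
    intro i i' hi hi' he
    by_contra hne
    have := hgap i i' hi hi' hne
    rw [he, sub_self, abs_zero] at this
    linarith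
  -- the finset of values
  set S : Finset (Fin n) := Finset.univ.erase j with hS
  have hmemS : ∀ i, i ∈ S ↔ i ≠ j := by
    intro i; rw [hS, Finset.mem_erase]; simp
  have hScard : S.card = n - 1 := by
    rw [hS, Finset.card_erase_of_mem (Finset.mem_univ j), Finset.card_univ, Fintype.card_fin]
  set T : Finset ℝ := S.image φ with hT
  have hTcard : T.card = n - 1 := by
    rw [hT, Finset.card_image_of_injOn, hScard]
    intro i hi i' hi' he
    exact hφinj i i' ((hmemS i).mp hi) ((hmemS i').mp hi') he
  have hTne : T.Nonempty := by
    rw [← Finset.card_pos, hTcard]; omega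
  obtain ⟨a, haS, hamin⟩ := Finset.mem_image.mp (T.min'_mem hTne)
  obtain ⟨b, hbS, hbmax⟩ := Finset.mem_image.mp (T.max'_mem hTne)
  have haj : a ≠ j := (hmemS a).mp haS
  have hbj : b ≠ j := (hmemS b).mp hbS
  have hφa_min : ∀ i, i ≠ j → φ a ≤ φ i := by
    intro i hi
    rw [hamin]
    exact Finset.min'_le T _ (Finset.mem_image_of_mem φ ((hmemS i).mpr hi))
  have hφb_max : ∀ i, i ≠ j → φ i ≤ φ b := by
    intro i hi
    rw [hbmax]
    exact Finset.le_max' T _ (Finset.mem_image_of_mem φ ((hmemS i).mpr hi))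
  -- spread
  have hspread : ((n:ℝ) - 2) * (π/n) ≤ φ b - φ a := by
    have := spread (π/n) (n-2) T hTne (by omega) ?_
    · rw [hamin, hbmax]
      convert this using 2
      have : (2:ℝ) ≤ n := by exact_mod_cast (by omega : 2 ≤ n)
      push_cast [Nat.cast_sub (by omega : 2 ≤ n)]
      ring
    · intro x hx y hy hxy
      obtain ⟨i, hi, rfl⟩ := Finset.mem_image.mp hx
      obtain ⟨i', hi', rfl⟩ := Finset.mem_image.mp hy
      exact hgap i i' ((hmemS i).mp hi) ((hmemS i').mp hi')
        (fun he => hxy (by rw [he]))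
  have hab : a ≠ b := by
    intro he
    rw [he, sub_self] at hspread
    have : (2:ℝ) < n := by exact_mod_cast (by omega : 2 < n)
    nlinarith
  have hpaj : p a ≠ p j := fun he => haj (hp he)
  have hpbj : p b ≠ p j := fun he => hbj (hp he)
  have hpab : p a ≠ p b := fun he => hab (hp he)
  -- triangle sum
  have htri := EuclideanGeometry.angle_add_angle_add_angle_eq_pi
    (p₁ := p a) (p₂ := p j) (p b) hpaj.symm
  have hφab : φ a ≤ φ b := hφa_min b hbj
  have hspan_eq : EuclideanGeometry.angle (p a) (p j) (p b) = φ b - φ a := by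
    rw [hangle a b haj hbj, abs_sub_comm, _root_.abs_of_nonneg (by linarith)]
  have hA : π/n ≤ EuclideanGeometry.angle (p j) (p b) (p a) :=
    h j b a hbj.symm hab.symm haj.symm
  have hB : π/n ≤ EuclideanGeometry.angle (p b) (p a) (p j) :=
    h b a j hab.symm haj hbj
  have hident : ((n:ℝ)-2)*(π/n) = π - 2*(π/n) := by
    field_simp
  rw [hident] at hspread
  have hspan : φ b - φ a = π - 2*(π/n) := by
    rw [hspan_eq] at htri; linarith
  have hAeq : EuclideanGeometry.angle (p j) (p b) (p a) = π/n := by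
    rw [hspan_eq] at htri; linarith
  have hBeq : EuclideanGeometry.angle (p b) (p a) (p j) = π/n := by
    rw [hspan_eq] at htri; linarith
  have hdist : dist (p j) (p a) = dist (p j) (p b) := by
    apply EuclideanGeometry.dist_eq_of_angle_eq_angle_of_angle_ne_pi
    · rw [EuclideanGeometry.angle_comm, hBeq, hAeq]
    · rw [hspan_eq, hspan]
      intro hcon
      have : π / n > 0 := hπn
      nlinarith
  refine ⟨a, haj, ⟨sub_ne_zero.mpr hpaj, ?_⟩, ?_⟩
  · intro i hia
    by_cases hij : i = j
    · subst hij
      rw [show p i - p a = -(p a - p i) by ring, neg_div,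
        div_self (sub_ne_zero.mpr hpaj)]
      simp
    · have hrw : (p i - p a)/(p a - p j) = q i / q a - 1 := by
        simp only [hq]
        have h1 : p a - p j ≠ 0 := sub_ne_zero.mpr hpaj
        field_simp
        ring
      rw [hrw]
      have him : (q i / q a - 1).im = (q i / q a).im := by
        simp [Complex.sub_im]
      rw [him, div_im_eq (q i) (q a) (hqne a haj)]
      apply mul_nonneg (div_nonneg (norm_nonneg _) (norm_nonneg _))
      apply Real.sin_nonneg_of_nonneg_of_le_pi
      · have := hφa_min i hij
        simp only [hφ] at this ⊢
        linarith
      · have h1 := hφπ i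
        have h2 := hφ0 a haj
        simp only [hφ] at h1 h2 ⊢
        linarith
  · intro b' hb'j hb'eq
    have hqb' : q b' = -1 := by
      rw [hq]; simp only; rw [hb'eq, neg_div, div_self hu]
    have hφb' : φ b' = π := by
      simp only [hφ, hqb']
      exact Complex.arg_neg_one
    have hφbπ : φ b = π := le_antisymm (hφπ b) (hφb' ▸ hφb_max b' hb'j)
    have hbb' : b = b' := hφinj b b' hbj hb'j (by rw [hφbπ, hφb'])
    have hφa2 : φ a = 2*(π/n) := by linarith
    have habs_u : ‖p b - p j‖ = ‖u‖ := by
      rw [hbb', hb'eq]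
      simp
    have habs_a : ‖p a - p j‖ = ‖u‖ := by
      have h1 : ‖p a - p j‖ = dist (p j) (p a) := by
        rw [Complex.dist_eq, norm_sub_rev]
      have h2 : ‖p b - p j‖ = dist (p j) (p b) := by
        rw [Complex.dist_eq, norm_sub_rev]
      rw [h1, hdist, ← h2, habs_u]
    have hqa_abs : ‖q a‖ = 1 := by
      rw [hq]
      simp only [norm_div, habs_a]
      exact div_self (norm_ne_zero_iff.mpr hu)
    have hqa : q a = Complex.exp (2*π*Complex.I/n) := by
      conv_lhs => rw [← Complex.norm_mul_exp_arg_mul_I (q a)]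
      rw [hqa_abs]
      have harg : (q a).arg = 2*(π/n) := hφa2
      rw [harg]
      rw [Complex.ofReal_one, one_mul]
      congr 1
      push_cast
      ring
    have : p a - p j = q a * u := by
      rw [hq]; simp only; rw [div_mul_cancel₀ _ hu]
    rw [this, hqa]

theorem extremal_config_is_regular_ngon (n : ℕ) (hn : 3 ≤ n)
    (p : Fin n → ℂ) (hp : Function.Injective p)
    (h : ∀ i j k : Fin n, i ≠ j → j ≠ k → i ≠ k → π / n ≤ ∠ (p i) (p j) (p k)) :
    ∃ (c : ℂ) (r : ℝ) (u : ℂ) (σ : Fin n ≃ Fin n), 0 < r ∧ ‖u‖ = 1 ∧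
      ∀ k : Fin n, p (σ k) = c + r * u * Complex.exp (2 * π * k * Complex.I / n) := by
  classical
  have hn0 : n ≠ 0 := by omega
  set ζ : ℂ := Complex.exp (2*π*Complex.I/n) with hζdef
  have hζprim : IsPrimitiveRoot ζ n := by
    rw [hζdef]
    exact Complex.isPrimitiveRoot_exp n hn0
  have hζ1 : ζ ≠ 1 := hζprim.ne_one (by omega)
  have hζsub : ζ - 1 ≠ 0 := sub_ne_zero.mpr hζ1
  obtain ⟨j₀, -, hj₀⟩ := Finset.exists_min_image Finset.univ (fun i => (p i).re)
    ⟨⟨0, by omega⟩, Finset.mem_univ _⟩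
  set Inv : Fin n × ℂ → Prop :=
    fun s => s.2 ≠ 0 ∧ ∀ i, i ≠ s.1 → 0 ≤ ((p i - p s.1)/s.2).im with hInvdef
  have vertex : ∀ s : Fin n × ℂ, Inv s → ∃ a, a ≠ s.1 ∧
      ((p a - p s.1 ≠ 0) ∧ ∀ i, i ≠ a → 0 ≤ ((p i - p a)/(p a - p s.1)).im) ∧
      (∀ b, b ≠ s.1 → p b - p s.1 = -s.2 → p a - p s.1 = ζ * s.2) := by
    intro s hs
    exact vertexA n hn p hp h s.1 s.2 hs.1 hs.2
  set step : Fin n × ℂ → Fin n × ℂ := fun s =>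
    if hI : Inv s then ((vertex s hI).choose, p (vertex s hI).choose - p s.1) else s
    with hstepdef
  set F : ℕ → Fin n × ℂ := fun m => Nat.rec (j₀, -Complex.I) (fun _ s => step s) m with hFdef
  have hFsucc : ∀ m, F (m+1) = step (F m) := fun m => rfl
  have hInv0 : Inv (F 0) := by
    show Inv (j₀, -Complex.I)
    rw [hInvdef]
    simp only
    constructor
    · simp [Complex.I_ne_zero]
    · intro i hi
      have hdiv : (p i - p j₀)/(-Complex.I) = (p i - p j₀) * Complex.I := by
        rw [div_eq_mul_inv, inv_neg, Complex.inv_I, neg_neg]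
      rw [hdiv, Complex.mul_im]
      simp only [Complex.I_re, Complex.I_im, mul_zero, mul_one, zero_add, add_zero]
      have := hj₀ i (Finset.mem_univ i)
      simp only [Complex.sub_re]
      linarith
  have hInvF : ∀ m, Inv (F m) := by
    intro m
    induction m with
    | zero => exact hInv0
    | succ m ih =>
      rw [hFsucc, hstepdef]
      simp only [dif_pos ih]
      exact ⟨(vertex (F m) ih).choose_spec.2.1.1, (vertex (F m) ih).choose_spec.2.1.2⟩
  have hstep_eq : ∀ m, F (m+1) =
      ((vertex (F m) (hInvF m)).choose, p (vertex (F m) (hInvF m)).choose - p (F m).1) := by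
    intro m
    rw [hFsucc, hstepdef]
    simp only [dif_pos (hInvF m)]
  have hne : ∀ m, (F (m+1)).1 ≠ (F m).1 := by
    intro m
    rw [hstep_eq m]
    exact (vertex (F m) (hInvF m)).choose_spec.1
  have hv : ∀ m, (F (m+1)).2 = p (F (m+1)).1 - p (F m).1 := by
    intro m
    rw [hstep_eq m]
  have hrot : ∀ m, (F (m+2)).2 = ζ * (F (m+1)).2 := by
    intro m
    have spec := (vertex (F (m+1)) (hInvF (m+1))).choose_spec
    have hb := spec.2.2 (F m).1 (hne m).symm (by rw [hv m]; ring)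
    rw [hstep_eq (m+1)]
    exact hb
  have hv1ne : (F 1).2 ≠ 0 := (hInvF 1).1
  have hpow : ∀ m, (F (m+1)).2 = ζ^m * (F 1).2 := by
    intro m
    induction m with
    | zero => simp
    | succ m ih => rw [hrot m, ih]; ring
  have htel : ∀ m, p (F m).1 = p (F 0).1 + (F 1).2 * (ζ^m - 1)/(ζ - 1) := by
    intro m
    induction m with
    | zero => simp
    | succ m ih =>
      have : p (F (m+1)).1 = p (F m).1 + (F (m+1)).2 := by rw [hv m]; ring
      rw [this, ih, hpow m]
      field_simp
      ring
  set g : Fin n → Fin n := fun k => (F k).1 with hgdef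
  have hginj : Function.Injective g := by
    intro k k' he
    have hpe : p (F (k:ℕ)).1 = p (F (k':ℕ)).1 := congrArg p he
    rw [htel (k:ℕ), htel (k':ℕ)] at hpe
    have h2 := add_left_cancel hpe
    rw [mul_div_assoc, mul_div_assoc] at h2
    have h4 := mul_left_cancel₀ hv1ne h2
    have h5 : ζ^(k:ℕ) - 1 = ζ^(k':ℕ) - 1 := (div_left_inj' hζsub).mp h4
    have hζk : ζ^(k:ℕ) = ζ^(k':ℕ) := by linear_combination h5
    exact Fin.ext (hζprim.pow_inj k.isLt k'.isLt hζk)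
  set R : ℂ := (F 1).2 / (ζ - 1) with hRdef
  have hRne : R ≠ 0 := div_ne_zero hv1ne hζsub
  have hRabs : (0:ℝ) < ‖R‖ := norm_pos_iff.mpr hRne
  refine ⟨p (F 0).1 - R, ‖R‖, R / (‖R‖), 
    Equiv.ofBijective g ((Finite.injective_iff_bijective).mp hginj), hRabs, ?_, ?_⟩
  · rw [norm_div, Complex.norm_real, norm_norm,
      div_self hRabs.ne']
  · intro k
    have hgk : (Equiv.ofBijective g ((Finite.injective_iff_bijective).mp hginj)) k = g k := rfl
    rw [hgk, hgdef]
    simp only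
    rw [htel (k:ℕ)]
    have hexp : Complex.exp (2 * (π:ℂ) * (k:ℕ) * Complex.I / n) = ζ^(k:ℕ) := by
      rw [hζdef, ← Complex.exp_nat_mul]
      congr 1
      push_cast
      ring
    have habsR : ((‖R‖ : ℝ) : ℂ) * (R / (‖R‖)) = R := by
      have hc : ((‖R‖ : ℝ) : ℂ) ≠ 0 := by exact_mod_cast hRabs.ne'
      rw [mul_comm, div_mul_eq_mul_div, mul_div_assoc, div_self hc, mul_one]
    rw [hexp, habsR, hRdef]
    field_simp
    ring
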